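/- Let G be a finite group and suppose M and M' are G-lattices with flabby resolutions 0 → M → P → F → 0 and 0 → M → P' → F' → 0 (P, P' permutation; F, F' flabby). Then F ⊕ P' ≅ F' ⊕ P as G-lattices; in particular the similarity class [F] in C(G)/S(G) is independent of the chosen flabby resolution. -/

import Mathlib

noncomputable section

namespace Paper

open Function

variable {G : Type} [Group G]

/-- The Tate cohomology `Ĥ⁻¹` of a finite group acting on a `ℤ`-module vanishes:
every element killed by the norm map lies in the augmentation submodule. -/
def Hneg1Vanish [Finite G] {M : Type} [AddCommGroup M] [Module ℤ M]
    (ρ : Representation ℤ G M) : Prop :=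
  ∀ m : M, (∑ᶠ g : G, ρ g m) = 0 →
    m ∈ Submodule.span ℤ {x : M | ∃ (g : G) (y : M), x = ρ g y - y}

/-- The Tate cohomology `Ĥ⁰` vanishes: every invariant element is a norm. -/
def Hhat0Vanish [Finite G] {M : Type} [AddCommGroup M] [Module ℤ M]
    (ρ : Representation ℤ G M) : Prop :=
  ∀ m : M, (∀ g : G, ρ g m = m) → ∃ y : M, m = ∑ᶠ g : G, ρ g y

/-- `H¹` vanishes: every inhomogeneous 1-cocycle is a 1-coboundary. -/
def H1Vanish {M : Type} [AddCommGroup M] [Module ℤ M]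
    (ρ : Representation ℤ G M) : Prop :=
  ∀ f : G → M, (∀ g h : G, f (g * h) = ρ g (f h) + f g) →
    ∃ m : M, ∀ g : G, f g = ρ g m - m

/-- A `G`-lattice: a finitely generated `ℤ`-free module with a `G`-action. -/
structure GLat (G : Type) [Group G] : Type 1 where
  carrier : Type
  [ab : AddCommGroup carrier]
  [mod : Module ℤ carrier]
  [free : Module.Free ℤ carrier]
  [fin : Module.Finite ℤ carrier]
  ρ : Representation ℤ G carrier

attribute [instance] GLat.ab GLat.mod GLat.free GLat.fin

attribute [local instance 2000] Prod.instModule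

instance : CoeSort (GLat G) Type := ⟨GLat.carrier⟩

/-- Build a `G`-lattice from a representation on a finite free `ℤ`-module. -/
def ofRep (M : Type) [AddCommGroup M] [Module ℤ M] [Module.Free ℤ M] [Module.Finite ℤ M]
    (ρ : Representation ℤ G M) : GLat G :=
  { carrier := M, ρ := ρ }

namespace GLat

/-- Direct sum of two `G`-lattices. -/
def sum (M N : GLat G) : GLat G where
  carrier := M.carrier × N.carrier
  ab := Prod.instAddCommGroup
  mod := Prod.instModule
  free := Module.Free.prod ℤ M.carrier N.carrier
  fin := Module.Finite.prod
  ρ :=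
    { toFun := fun g => (M.ρ g).prodMap (N.ρ g)
      map_one' := by
        letI : Module ℤ (M.carrier × N.carrier) := Prod.instModule
        refine LinearMap.ext fun x => ?_
        simp
      map_mul' := fun g h => by
        letI : Module ℤ (M.carrier × N.carrier) := Prod.instModule
        refine LinearMap.ext fun x => ?_
        simp }

/-- Equivariant isomorphism of `G`-lattices. -/
def Iso (M N : GLat G) : Prop :=
  ∃ e : M.carrier ≃ₗ[ℤ] N.carrier, ∀ (g : G) (m : M.carrier), e (M.ρ g m) = N.ρ g (e m)

/-- A `ℤ`-linear map of `G`-lattices is equivariant. -/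
def IsEquivariant (M N : GLat G) (f : M.carrier →ₗ[ℤ] N.carrier) : Prop :=
  ∀ (g : G) (m : M.carrier), f (M.ρ g m) = N.ρ g (f m)

/-- A permutation `G`-lattice: it has a `ℤ`-basis permuted by `G`. -/
def IsPermutation (M : GLat G) : Prop :=
  ∃ (ι : Type) (_ : Fintype ι) (b : Module.Basis ι ℤ M.carrier) (σ : G →* Equiv.Perm ι),
    ∀ (g : G) (i : ι), M.ρ g (b i) = b (σ g i)

/-- A stably permutation `G`-lattice. -/
def IsStablyPermutation (M : GLat G) : Prop :=
  ∃ P Q : GLat G, P.IsPermutation ∧ Q.IsPermutation ∧ (M.sum P).Iso Q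

/-- An invertible `G`-lattice: a direct summand of a permutation lattice. -/
def IsInvertible (M : GLat G) : Prop :=
  ∃ N Q : GLat G, Q.IsPermutation ∧ (M.sum N).Iso Q

/-- Flabby: `Ĥ⁻¹(H, M) = 0` for every subgroup `H ≤ G`. -/
def IsFlabby [Finite G] (M : GLat G) : Prop :=
  ∀ H : Subgroup G, Hneg1Vanish (MonoidHom.comp M.ρ H.subtype)

/-- Coflabby: `H¹(H, M) = 0` for every subgroup `H ≤ G`. -/
def IsCoflabby (M : GLat G) : Prop :=
  ∀ H : Subgroup G, H1Vanish (MonoidHom.comp M.ρ H.subtype)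

/-- Restriction of a `G`-lattice to a subgroup `H`. -/
def res (H : Subgroup G) (M : GLat G) : GLat H :=
  { carrier := M.carrier, ρ := MonoidHom.comp M.ρ H.subtype }

end GLat

/-- A flabby resolution `0 → M → P → F → 0` of a `G`-lattice `M`:
`P` is permutation and `F` is flabby. -/
structure FlabbyResolution [Finite G] (M : GLat G) : Type 1 where
  P : GLat G
  F : GLat G
  incl : M.carrier →ₗ[ℤ] P.carrier
  proj : P.carrier →ₗ[ℤ] F.carrier
  equiv_incl : GLat.IsEquivariant M P incl
  equiv_proj : GLat.IsEquivariant P F proj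
  inj : Function.Injective incl
  surj : Function.Surjective proj
  exact : LinearMap.range incl = LinearMap.ker proj
  permP : P.IsPermutation
  flabbyF : F.IsFlabby

/-- The flabby class `[M]^{fl}` is zero: the flabby part of a flabby resolution
is stably permutation. -/
def FlabbyClassZero [Finite G] (M : GLat G) : Prop :=
  ∃ R : FlabbyResolution M, R.F.IsStablyPermutation

/-- The flabby class `[M]^{fl}` is invertible. -/
def FlabbyClassInvertible [Finite G] (M : GLat G) : Prop :=
  ∃ R : FlabbyResolution M, R.F.IsInvertible

/-- The permutation `G`-lattice `ℤ[S]` on a finite `G`-set `S`. -/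
def ofMulActionGLat (G : Type) [Group G] (S : Type) [MulAction G S] [Finite S] : GLat G :=
  letI : Fintype S := Fintype.ofFinite S
  { carrier := S →₀ ℤ
    fin := Module.Finite.equiv (Finsupp.linearEquivFunOnFinite ℤ ℤ S).symm
    ρ := (((MonoidAlgebra.coeffLinearEquiv ℤ).conjAlgEquiv ℤ).toMonoidHom).comp
      (Representation.ofMulAction ℤ G S) }

/-- The trivial rank-one `G`-lattice `ℤ`. -/
def trivialGLat (G : Type) [Group G] : GLat G :=
  { carrier := ℤ, ρ := (1 : Representation ℤ G ℤ) }

/-- cast `ℤ → ℚ` as a `ℤ`-linear map. -/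
def zq : ℤ →ₗ[ℤ] ℚ := (Int.castAddHom ℚ).toIntLinearMap

@[simp] lemma zq_apply (z : ℤ) : zq z = (z : ℚ) := rfl

lemma smul_cancel {R M : Type} [CommRing R] [IsDomain R] [AddCommGroup M] [Module R M]
    [NoZeroSMulDivisors R M] {c : R} {x : M} (hc : c ≠ 0) (h : c • x = 0) : x = 0 :=
  (smul_eq_zero.mp h).resolve_left hc

lemma free_of_tf {R M : Type} [CommRing R] [IsDomain R] [IsPrincipalIdealRing R]
    [AddCommGroup M] [Module R M] [Module.Finite R M]
    (htf : ∀ (c : R) (x : M), c • x = 0 → c = 0 ∨ x = 0) : Module.Free R M := by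
  haveI : NoZeroSMulDivisors R M := ⟨fun {c x} => htf c x⟩
  exact Module.free_of_finite_type_torsion_free'

lemma dual_h1_vanish {H : Type} [Group H] [Finite H]
    {F : Type} [AddCommGroup F] [Module ℤ F] [Module.Free ℤ F] [Module.Finite ℤ F]
    (ρ : Representation ℤ H F) (hfl : Hneg1Vanish ρ)
    (d : H → F →ₗ[ℤ] ℤ)
    (hd : ∀ g h : H, ∀ x : F, d (g * h) x = d h (ρ g⁻¹ x) + d g x) :
    ∃ m : F →ₗ[ℤ] ℤ, ∀ (g : H) (x : F), d g x = m (ρ g⁻¹ x) - m x := by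
  haveI : Fintype H := Fintype.ofFinite H
  set n : ℕ := Fintype.card H with hn
  have hnq : (n : ℚ) ≠ 0 := by
    exact_mod_cast Nat.cast_ne_zero.mpr Fintype.card_ne_zero
  set S : F →ₗ[ℤ] ℤ := ∑ h : H, d h with hS
  set φ₀ : F →ₗ[ℤ] ℚ := (-(n : ℚ)⁻¹) • (zq ∘ₗ S) with hφ₀
  have key : ∀ (g : H) (x : F), (d g x : ℚ) = φ₀ (ρ g⁻¹ x) - φ₀ x := by
    intro g x
    have hsum : S x = S (ρ g⁻¹ x) + (n : ℤ) * d g x := by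
      have h1 : (∑ h : H, d (g * h) x) = S x := by
        rw [hS, LinearMap.sum_apply]
        exact Fintype.sum_bijective (fun h => g * h) (Group.mulLeft_bijective g)
          (fun h => d (g * h) x) (fun h => d h x) (fun h => rfl)
      have h2 : (∑ h : H, d (g * h) x) = (∑ h : H, d h (ρ g⁻¹ x)) + n • d g x := by
        rw [Finset.sum_congr rfl (fun h _ => hd g h x), Finset.sum_add_distrib]
        simp [hn, Finset.card_univ]
      rw [h1] at h2
      rw [h2, hS, LinearMap.sum_apply]
      ring
    have : (S x : ℚ) = (S (ρ g⁻¹ x) : ℚ) + (n : ℚ) * (d g x : ℚ) := by exact_mod_cast hsum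
    have hmul : (n : ℚ) * (d g x : ℚ) = (S x : ℚ) - (S (ρ g⁻¹ x) : ℚ) := by linarith
    have hval : ∀ y : F, φ₀ y = -(n : ℚ)⁻¹ * (S y : ℚ) := by
      intro y
      rw [hφ₀]
      simp [smul_eq_mul]
    rw [hval, hval]
    calc (d g x : ℚ) = (n : ℚ)⁻¹ * ((n : ℚ) * (d g x : ℚ)) := by
          rw [inv_mul_cancel_left₀ hnq]
      _ = (n : ℚ)⁻¹ * ((S x : ℚ) - (S (ρ g⁻¹ x) : ℚ)) := by rw [hmul]
      _ = -(n : ℚ)⁻¹ * (S (ρ g⁻¹ x) : ℚ) - -(n : ℚ)⁻¹ * (S x : ℚ) := by ring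
  set I : Submodule ℤ F := Submodule.span ℤ {x : F | ∃ (g : H) (y : F), x = ρ g y - y} with hI
  letI : Module ℤ (F ⧸ I) := Submodule.Quotient.module I
  set Nm : F →ₗ[ℤ] F := ∑ h : H, (ρ h : F →ₗ[ℤ] F) with hNm
  have hNmI : ∀ v ∈ I, Nm v = 0 := by
    intro v hv
    refine Submodule.span_induction ?_ (by simp) (fun a b _ _ ha hb => by
      simp [map_add, ha, hb]) (fun c a _ ha => by simp [map_smul, ha]) hv
    rintro x ⟨g, y, rfl⟩
    rw [map_sub, hNm, LinearMap.sum_apply, LinearMap.sum_apply]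
    have : (∑ h : H, (ρ h : F →ₗ[ℤ] F) (ρ g y)) = ∑ h : H, (ρ h : F →ₗ[ℤ] F) y := by
      have e : ∀ h : H, (ρ h) (ρ g y) = ρ (h * g) y := by
        intro h; rw [map_mul]; rfl
      rw [Finset.sum_congr rfl (fun h _ => e h)]
      exact Fintype.sum_bijective (fun h => h * g) (Group.mulRight_bijective g)
        (fun h => ρ (h * g) y) (fun h => ρ h y) (fun h => rfl)
    rw [this, sub_self]
  haveI := @IsScalarTower.left ℤ F _ Module.toDistribMulAction.toMulAction
  haveI := Module.Finite.quotient ℤ I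
  haveI := @smulCommClass_self ℤ F _ Module.toDistribMulAction.toMulAction
  haveI : Module.Free ℤ (F ⧸ I) := by
    apply free_of_tf
    intro c x hcx
    by_cases hc : c = 0
    · exact Or.inl hc
    · right
      obtain ⟨y, rfl⟩ := Submodule.mkQ_surjective I x
      rw [← LinearMap.map_smul] at hcx
      rw [Submodule.mkQ_apply, Submodule.Quotient.mk_eq_zero] at hcx
      have h0 := hNmI _ hcx
      rw [LinearMap.map_smul] at h0
      have hNy : Nm y = 0 := (smul_eq_zero.mp h0).resolve_left hc
      have : y ∈ I := by
        apply hfl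
        rw [finsum_eq_sum_of_fintype]
        simpa [hNm, LinearMap.sum_apply] using hNy
      simpa [Submodule.Quotient.mk_eq_zero] using this
  set eB := Module.Free.chooseBasis ℤ (F ⧸ I) with heB
  set xk : Module.Free.ChooseBasisIndex ℤ (F ⧸ I) → F :=
    fun k => (Submodule.mkQ_surjective I (eB k)).choose with hxkdef
  have hxk : ∀ k, I.mkQ (xk k) = eB k := fun k => (Submodule.mkQ_surjective I (eB k)).choose_spec
  set l : (F ⧸ I) →ₗ[ℤ] ℚ := eB.constr ℤ (fun k => φ₀ (xk k)) with hl
  set ψ : F →ₗ[ℤ] ℚ := l ∘ₗ I.mkQ with hψ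
  have hψinv : ∀ (g : H) (x : F), ψ (ρ g x) = ψ x := by
    intro g x
    have : I.mkQ (ρ g x) = I.mkQ x := by
      rw [← sub_eq_zero, ← map_sub, Submodule.mkQ_apply, Submodule.Quotient.mk_eq_zero]
      exact Submodule.subset_span ⟨g, x, rfl⟩
    simp only [hψ, LinearMap.coe_comp, Function.comp_apply, this]
  have hφ₀I : ∀ v ∈ I, ∃ z : ℤ, φ₀ v = (z : ℚ) := by
    intro v hv
    refine Submodule.span_induction ?_ ⟨0, by simp⟩ ?_ ?_ hv
    · rintro x ⟨g, y, rfl⟩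
      exact ⟨d g⁻¹ y, by rw [map_sub]; have := key g⁻¹ y; rw [inv_inv] at this; linarith⟩
    · rintro a b _ _ ⟨za, ha⟩ ⟨zb, hb⟩
      exact ⟨za + zb, by rw [map_add, ha, hb]; push_cast; ring⟩ -- ok
    · rintro c a _ ⟨z, hz⟩
      exact ⟨c * z, by rw [LinearMap.map_smul, hz, zsmul_eq_mul]; push_cast; ring⟩
  set D : F →ₗ[ℤ] ℚ := φ₀ - ψ with hD
  have hDxk : ∀ k, D (xk k) = 0 := by
    intro k
    simp only [hD, LinearMap.sub_apply, hψ, LinearMap.coe_comp, Function.comp_apply, hxk k, hl,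
      Module.Basis.constr_basis, sub_self]
  have hDint : ∀ x : F, ∃ z : ℤ, D x = (z : ℚ) := by
    have sec : (F ⧸ I) →ₗ[ℤ] F := eB.constr ℤ xk
    have hsec : I.mkQ ∘ₗ eB.constr ℤ xk = LinearMap.id := by
      apply eB.ext
      intro k
      simp only [LinearMap.coe_comp, Function.comp_apply, Module.Basis.constr_basis, hxk,
        LinearMap.id_apply]
    have hDsec : D ∘ₗ eB.constr ℤ xk = 0 := by
      apply eB.ext
      intro k
      simp only [LinearMap.coe_comp, Function.comp_apply, Module.Basis.constr_basis, hDxk,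
        LinearMap.zero_apply]
    intro x
    set y : F := eB.constr ℤ xk (I.mkQ x) with hy
    have hmky : I.mkQ y = I.mkQ x := LinearMap.congr_fun hsec (I.mkQ x)
    have hxyI : x - y ∈ I := by
      rw [← Submodule.Quotient.mk_eq_zero, ← Submodule.mkQ_apply, map_sub, hmky, sub_self]
    obtain ⟨z, hz⟩ := hφ₀I (x - y) hxyI
    refine ⟨z, ?_⟩
    have hDy : D y = 0 := LinearMap.congr_fun hDsec (I.mkQ x)
    have hψxy : ψ (x - y) = 0 := by
      rw [hψ]
      simp only [LinearMap.coe_comp, Function.comp_apply, map_sub, hmky, sub_self, map_zero]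
    have : D x = D (x - y) + D y := by rw [map_sub]; ring
    rw [this, hDy, add_zero, hD, LinearMap.sub_apply, hψxy, sub_zero, hz]
  set bF := Module.Free.chooseBasis ℤ F with hbF
  set m : F →ₗ[ℤ] ℤ :=
    (Finsupp.linearCombination ℤ (fun k => (hDint (bF k)).choose)) ∘ₗ
      (bF.repr : F ≃ₗ[ℤ] _).toLinearMap with hm
  have hmD : ∀ x, (m x : ℚ) = D x := by
    have : zq ∘ₗ m = D := by
      apply bF.ext
      intro k
      simp only [LinearMap.coe_comp, Function.comp_apply, hm, LinearEquiv.coe_coe,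
        Module.Basis.repr_self, Finsupp.linearCombination_single, one_smul, zq_apply]
      exact ((hDint (bF k)).choose_spec).symm
    intro x
    calc (m x : ℚ) = (zq ∘ₗ m) x := rfl
      _ = D x := by rw [this]
  refine ⟨m, fun g x => ?_⟩
  have h1 := key g x
  have h2 := hmD (ρ g⁻¹ x)
  have h3 := hmD x
  have h4 := hψinv g⁻¹ x
  apply Int.cast_injective (α := ℚ)
  push_cast
  rw [h2, h3, hD] at *
  simp only [LinearMap.sub_apply] at h2 h3 ⊢
  rw [h1]
  have : ψ (ρ g⁻¹ x) = ψ x := h4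
  linarith [h2, h3]
lemma perm_h1_vanish {G : Type} [Group G] [Finite G]
    {F : Type} [AddCommGroup F] [Module ℤ F] [Module.Free ℤ F] [Module.Finite ℤ F]
    (ρ : Representation ℤ G F)
    (hfl : ∀ H : Subgroup G, Hneg1Vanish (ρ.comp H.subtype))
    {ι : Type} (σ : G →* Equiv.Perm ι)
    (c : G → ι → F →ₗ[ℤ] ℤ)
    (hc : ∀ (g h : G) (i : ι) (x : F), c (g * h) i x = c h ((σ g)⁻¹ i) (ρ g⁻¹ x) + c g i x) :
    ∃ m : ι → F →ₗ[ℤ] ℤ,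
      ∀ (g : G) (i : ι) (x : F), c g i x = m ((σ g)⁻¹ i) (ρ g⁻¹ x) - m i x := by
  have hρ : ∀ (a b : G) (x : F), ρ a (ρ b x) = ρ (a * b) x := by
    intro a b x; rw [map_mul]; rfl
  -- the orbit equivalence relation
  letI st : Setoid ι :=
    { r := fun i j => ∃ g : G, σ g j = i
      iseqv := by
        refine ⟨fun i => ⟨1, by simp⟩, ?_, ?_⟩
        · rintro i j ⟨g, rfl⟩
          exact ⟨g⁻¹, by simp⟩
        · rintro i j k ⟨g, rfl⟩ ⟨g', rfl⟩
          exact ⟨g * g', by simp [Equiv.Perm.mul_apply]⟩ }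
  let r : ι → ι := fun i => Quotient.out (Quotient.mk st i)
  have hrel : ∀ i : ι, ∃ g : G, σ g (r i) = i := by
    intro i
    obtain ⟨g, hg⟩ := (Quotient.mk_out (s := st) i : st.r (r i) i)
    refine ⟨g⁻¹, ?_⟩
    have hri : r i = σ g i := hg.symm
    rw [hri, map_inv]
    exact Equiv.symm_apply_apply _ _
  have hr_inv : ∀ (g : G) (i : ι), r ((σ g)⁻¹ i) = r i := by
    intro g i
    have : Quotient.mk st ((σ g)⁻¹ i) = Quotient.mk st i :=
      Quotient.sound ⟨g⁻¹, by rw [map_inv]⟩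
    simp only [r, this]
  choose τ hτ using hrel
  -- stabilizers
  let Stab : ι → Subgroup G := fun k => (MulAction.stabilizer (Equiv.Perm ι) k).comap σ
  have hStab : ∀ (k : ι) (g : G), g ∈ Stab k ↔ σ g k = k := by
    intro k g
    simp [Stab, MulAction.mem_stabilizer_iff, Equiv.Perm.smul_def]
  -- solve the cocycle on each stabilizer using `dual_h1_vanish`
  have main : ∀ k : ι, ∃ φ : F →ₗ[ℤ] ℤ,
      ∀ (h : G), σ h k = k → ∀ x : F, c h k x = φ (ρ h⁻¹ x) - φ x := by
    intro k
    have hd : ∀ g h : ↥(Stab k), ∀ x : F,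
        (fun h : ↥(Stab k) => c ↑h k) (g * h) x =
          (fun h : ↥(Stab k) => c ↑h k) h ((ρ.comp (Stab k).subtype) g⁻¹ x) +
          (fun h : ↥(Stab k) => c ↑h k) g x := by
      intro g h x
      have hg : σ ↑g k = k := (hStab k ↑g).mp g.2
      have : ((σ (↑g : G))⁻¹ k) = k := by
        show (σ (↑g : G)).symm k = k
        rw [Equiv.symm_apply_eq]
        exact hg.symm
      simpa [this] using hc ↑g ↑h k x
    obtain ⟨φ, hφ⟩ := dual_h1_vanish (ρ.comp (Stab k).subtype) (hfl (Stab k))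
      (fun h : ↥(Stab k) => c ↑h k) hd
    refine ⟨φ, fun h hh x => ?_⟩
    exact hφ ⟨h, (hStab k h).mpr hh⟩ x
  choose φ hφ using main
  refine ⟨fun i => (φ (r i)).comp (ρ (τ i)⁻¹) - c (τ i) i, fun g i x => ?_⟩
  set j := (σ g)⁻¹ i with hj
  have hrj : r j = r i := hr_inv g i
  have hσgj : σ (τ j) (r i) = j := by rw [← hrj]; exact hτ j
  have hσgi : (σ (τ i))⁻¹ i = r i := by
    show (σ (τ i)).symm i = r i
    rw [Equiv.symm_apply_eq]
    exact (hτ i).symm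
  have hσgji : σ g j = i := Equiv.apply_symm_apply _ _
  have hmem : σ ((τ i)⁻¹ * (g * τ j)) (r i) = r i := by
    have e0 : σ ((τ i)⁻¹ * (g * τ j)) (r i) = σ (τ i)⁻¹ (σ g (σ (τ j) (r i))) := by
      simp [map_mul, Equiv.Perm.mul_apply]
    rw [e0, hσgj, hσgji, map_inv]
    exact hσgi
  have h1 : c (g * τ j) i x = c (τ j) j (ρ g⁻¹ x) + c g i x := hc g (τ j) i x
  have h2 : c (g * τ j) i x =
      c ((τ i)⁻¹ * (g * τ j)) (r i) (ρ (τ i)⁻¹ x) + c (τ i) i x := by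
    have := hc (τ i) ((τ i)⁻¹ * (g * τ j)) i x
    rwa [mul_inv_cancel_left, hσgi] at this
  have h3 : c ((τ i)⁻¹ * (g * τ j)) (r i) (ρ (τ i)⁻¹ x) =
      φ (r i) (ρ (g * τ j)⁻¹ x) - φ (r i) (ρ (τ i)⁻¹ x) := by
    have := hφ (r i) ((τ i)⁻¹ * (g * τ j)) hmem (ρ (τ i)⁻¹ x)
    rw [this, hρ]
    congr 2
    group
  have e1 : ρ (τ j)⁻¹ (ρ g⁻¹ x) = ρ (g * τ j)⁻¹ x := by rw [hρ]; congr 1; group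
  simp only [LinearMap.sub_apply, LinearMap.coe_comp, Function.comp_apply, hrj, e1]
  have h4 : c (τ j) j (ρ g⁻¹ x) = c (g * τ j) i x - c g i x := by linarith
  rw [h4]
  rw [h2, h3]
  ring

lemma equivariant_splitting {G : Type} [Group G] [Finite G]
    {F : Type} [AddCommGroup F] [Module ℤ F] [Module.Free ℤ F] [Module.Finite ℤ F]
    (ρF : Representation ℤ G F)
    (hfl : ∀ H : Subgroup G, Hneg1Vanish (ρF.comp H.subtype))
    {Q : Type} [AddCommGroup Q] [Module ℤ Q]
    (ρQ : Representation ℤ G Q)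
    {ι : Type} [Fintype ι] (b : Module.Basis ι ℤ Q) (σ : G →* Equiv.Perm ι)
    (hb : ∀ g i, ρQ g (b i) = b (σ g i))
    {X : Type} [AddCommGroup X] [Module ℤ X] (ρX : Representation ℤ G X)
    (α : Q →ₗ[ℤ] X) (β : X →ₗ[ℤ] F)
    (hα : ∀ g q, α (ρQ g q) = ρX g (α q))
    (hβ : ∀ g x, β (ρX g x) = ρF g (β x))
    (hαinj : Function.Injective α) (hβsurj : Function.Surjective β)
    (hexact : LinearMap.ker β = LinearMap.range α) :
    ∃ e : (Q × F) ≃ₗ[ℤ] X,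
      ∀ (g : G) (p : Q × F), e ((ρQ g).prodMap (ρF g) p) = ρX g (e p) := by
  have hρF : ∀ (a b : G) (x : F), ρF a (ρF b x) = ρF (a * b) x := by
    intro a b x; rw [map_mul]; rfl
  have hρQ : ∀ (a b : G) (x : Q), ρQ a (ρQ b x) = ρQ (a * b) x := by
    intro a b x; rw [map_mul]; rfl
  have hρX : ∀ (a b : G) (x : X), ρX a (ρX b x) = ρX (a * b) x := by
    intro a b x; rw [map_mul]; rfl
  have hβα : ∀ q : Q, β (α q) = 0 := by
    intro q
    have : α q ∈ LinearMap.ker β := by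
      rw [hexact]; exact ⟨q, rfl⟩
    exact this
  -- ℤ-linear section of β
  obtain ⟨s₀, hs₀⟩ := Module.projective_lifting_property β LinearMap.id hβsurj
  have hs₀' : ∀ f : F, β (s₀ f) = f := fun f => LinearMap.congr_fun hs₀ f
  -- the cocycle of the section, with values in `ker β = range α`
  set t : G → F →ₗ[ℤ] X := fun g => ρX g ∘ₗ s₀ ∘ₗ ρF g⁻¹ - s₀ with ht
  have htval : ∀ (g : G) (f : F), t g f = ρX g (s₀ (ρF g⁻¹ f)) - s₀ f := fun g f => rfl
  have htrange : ∀ (g : G) (f : F), t g f ∈ LinearMap.range α := by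
    intro g f
    rw [← hexact]
    show β (t g f) = 0
    rw [htval, map_sub, hβ, hs₀', hs₀', hρF]
    simp
  -- pull the cocycle back to Q
  set bF := Module.Free.chooseBasis ℤ F with hbF
  set c : G → F →ₗ[ℤ] Q := fun g => bF.constr ℕ (fun k => (htrange g (bF k)).choose) with hcdef
  have hαc : ∀ g : G, α ∘ₗ c g = t g := by
    intro g
    apply bF.ext
    intro k
    simp only [LinearMap.coe_comp, Function.comp_apply, hcdef, Module.Basis.constr_basis]
    exact (htrange g (bF k)).choose_spec
  have hαc' : ∀ (g : G) (f : F), α (c g f) = t g f := fun g f => LinearMap.congr_fun (hαc g) f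
  have hcoc : ∀ (g h : G) (f : F), c (g * h) f = ρQ g (c h (ρF g⁻¹ f)) + c g f := by
    intro g h f
    apply hαinj
    rw [hαc', map_add, hα, hαc', hαc']
    simp only [htval]
    rw [map_sub, hρX, hρF, ← mul_inv_rev]
    abel
  -- coordinates of `c`
  have hrep : ∀ (g : G) (q : Q) (i : ι), b.repr (ρQ g q) i = b.repr q ((σ g)⁻¹ i) := by
    intro g q i
    have : (Finsupp.lapply i : (ι →₀ ℤ) →ₗ[ℤ] ℤ) ∘ₗ (b.repr : Q ≃ₗ[ℤ] _).toLinearMap ∘ₗ (ρQ g : Q →ₗ[ℤ] Q)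
        = (Finsupp.lapply ((σ g)⁻¹ i) : (ι →₀ ℤ) →ₗ[ℤ] ℤ) ∘ₗ (b.repr : Q ≃ₗ[ℤ] _).toLinearMap := by
      apply b.ext
      intro k
      simp only [LinearMap.coe_comp, Function.comp_apply, LinearEquiv.coe_coe, hb,
        Module.Basis.repr_self, Finsupp.lapply_apply]
      rcases eq_or_ne (σ g k) i with hk | hk
      · have hk' : k = (σ g)⁻¹ i := by rw [← hk]; exact (Equiv.symm_apply_apply _ _).symm
        simp [Finsupp.single_apply, hk, hk']
      · have hk' : k ≠ (σ g)⁻¹ i := by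
          intro h
          exact hk (by rw [h]; exact Equiv.apply_symm_apply _ _)
        simp only [Equiv.Perm.inv_def] at hk'
        simp [Finsupp.single_apply, hk, hk']
    exact LinearMap.congr_fun this q
  set c' : G → ι → F →ₗ[ℤ] ℤ := fun g i => Finsupp.lapply i ∘ₗ (b.repr : Q ≃ₗ[ℤ] _).toLinearMap ∘ₗ c g with hc'def
  have hc'val : ∀ g i f, c' g i f = b.repr (c g f) i := fun g i f => rfl
  have hc'coc : ∀ (g h : G) (i : ι) (x : F),
      c' (g * h) i x = c' h ((σ g)⁻¹ i) (ρF g⁻¹ x) + c' g i x := by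
    intro g h i x
    rw [hc'val, hc'val, hc'val, hcoc, map_add, Finsupp.add_apply, hrep]
  obtain ⟨m, hm⟩ := perm_h1_vanish ρF hfl σ c' hc'coc
  -- package `m` into a linear map `M : F →ₗ Q`
  haveI := @IsScalarTower.left ℤ Q _ Module.toDistribMulAction.toMulAction
  set M : F →ₗ[ℤ] Q := ∑ i : ι, LinearMap.smulRight (m i) (b i) with hM
  have hMrepr : ∀ (y : F) (i' : ι), b.repr (M y) i' = m i' y := by
    classical
    intro y i'
    rw [hM, LinearMap.sum_apply, map_sum, Finsupp.finset_sum_apply]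
    have he : ∀ i : ι, (b.repr (LinearMap.smulRight (m i) (b i) y)) i'
        = if i = i' then m i y else 0 := by
      intro i
      rw [LinearMap.smulRight_apply, LinearEquiv.map_smul, Module.Basis.repr_self, Finsupp.smul_apply,
        Finsupp.single_apply, smul_eq_mul]
      split_ifs <;> simp
    rw [Finset.sum_congr rfl (fun i _ => he i)]
    simp [Finset.sum_ite_eq']
  have hcM : ∀ (g : G) (f : F), c g f = ρQ g (M (ρF g⁻¹ f)) - M f := by
    intro g f
    apply b.repr.injective
    ext i
    rw [map_sub, Finsupp.sub_apply, hrep, hMrepr, hMrepr, ← hc'val, hm]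
  -- the equivariant section
  set s : F →ₗ[ℤ] X := s₀ - α ∘ₗ M with hs
  have hsval : ∀ f, s f = s₀ f - α (M f) := fun f => rfl
  have hβs : ∀ f, β (s f) = f := by
    intro f
    rw [hsval, map_sub, hs₀', hβα, sub_zero]
  have hseq : ∀ (g : G) (f : F), s (ρF g f) = ρX g (s f) := by
    intro g f
    have h1 : α (c g (ρF g f)) = t g (ρF g f) := hαc' _ _
    have h2 : c g (ρF g f) = ρQ g (M f) - M (ρF g f) := by
      rw [hcM, hρF, inv_mul_cancel, map_one, Module.End.one_apply]
    have h3 : t g (ρF g f) = ρX g (s₀ f) - s₀ (ρF g f) := by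
      rw [htval, hρF, inv_mul_cancel, map_one, Module.End.one_apply]
    rw [h2, h3] at h1
    rw [map_sub, hα] at h1
    rw [hsval, hsval, map_sub]
    rw [sub_eq_sub_iff_add_eq_add] at h1 ⊢
    rw [add_comm] at h1
    exact h1
  -- assemble the equivalence
  have hbij : Function.Bijective (α.coprod s) := by
    constructor
    · intro p p' hpp'
      have h1 : α p.1 + s p.2 = α p'.1 + s p'.2 := hpp'
      have h2 : p.2 = p'.2 := by
        have := congrArg β h1
        rwa [map_add, map_add, hβα, hβα, hβs, hβs, zero_add, zero_add] at this
      have h3 : p.1 = p'.1 := by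
        apply hαinj
        rw [h2] at h1
        exact add_right_cancel h1
      exact Prod.ext h3 h2
    · intro x
      have : x - s (β x) ∈ LinearMap.ker β := by
        rw [LinearMap.mem_ker, map_sub, hβs, sub_self]
      rw [hexact] at this
      obtain ⟨q, hq⟩ := this
      exact ⟨(q, β x), by simp [LinearMap.coprod_apply, hq]⟩
  refine ⟨LinearEquiv.ofBijective (α.coprod s) hbij, ?_⟩
  intro g p
  show α (ρQ g p.1) + s (ρF g p.2) = ρX g (α p.1 + s p.2)
  rw [hα, hseq, map_add]

/-- Given two flabby resolutions `0 → M → P → F → 0` and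
`0 → M → P' → F' → 0` of the same `G`-lattice `M`, we have `F ⊕ P' ≅ F' ⊕ P`;
in particular the similarity class of `F` is independent of the resolution. -/
theorem flabby_class_well_defined (G : Type) [Group G] [Finite G] (M : GLat G)
    (R R' : FlabbyResolution M) :
    (R.F.sum R'.P).Iso (R'.F.sum R.P) := by
  classical
  -- the pushout `X = (P × P') / {(ι m, -ι' m)}`
  set A := M.carrier
  set j : M.carrier →ₗ[ℤ] R.P.carrier × R'.P.carrier := R.incl.prod (-R'.incl) with hj
  set W : Submodule ℤ (R.P.carrier × R'.P.carrier) := LinearMap.range j with hW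
  letI : Module ℤ ((R.P.carrier × R'.P.carrier) ⧸ W) := Submodule.Quotient.module W
  have hWstable : ∀ g : G, W ≤ W.comap ((R.P.ρ g).prodMap (R'.P.ρ g)) := by
    rintro g _ ⟨m, rfl⟩
    refine ⟨M.ρ g m, ?_⟩
    have h1 : R.incl (M.ρ g m) = R.P.ρ g (R.incl m) := R.equiv_incl g m
    have h2 : R'.incl (M.ρ g m) = R'.P.ρ g (R'.incl m) := R'.equiv_incl g m
    simp only [hj, LinearMap.prod_apply, Function.prod_apply, LinearMap.neg_apply, LinearMap.prodMap_apply,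
      h1, h2, map_neg]
  set ρX : Representation ℤ G ((R.P.carrier × R'.P.carrier) ⧸ W) :=
    { toFun := fun g => W.mapQ W ((R.P.ρ g).prodMap (R'.P.ρ g)) (hWstable g)
      map_one' := by
        apply Submodule.linearMap_qext
        refine LinearMap.ext fun y => ?_
        simp [Submodule.mapQ_apply]
      map_mul' := fun g h => by
        apply Submodule.linearMap_qext
        refine LinearMap.ext fun y => ?_
        simp [Submodule.mapQ_apply, Submodule.mkQ_apply] } with hρX
  have hρXmk : ∀ (g : G) (y : R.P.carrier × R'.P.carrier),
      ρX g (W.mkQ y) = W.mkQ (((R.P.ρ g).prodMap (R'.P.ρ g)) y) := by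
    intro g y
    simp [hρX, Submodule.mapQ_apply, Submodule.mkQ_apply]
  -- first exact sequence `0 → P' → X → F → 0`
  have hker1 : W ≤ LinearMap.ker (R.proj ∘ₗ LinearMap.fst ℤ R.P.carrier R'.P.carrier) := by
    rintro _ ⟨m, rfl⟩
    have : R.incl m ∈ LinearMap.ker R.proj := by
      rw [← R.exact]; exact ⟨m, rfl⟩
    simpa [hj] using this
  set α₁ : R'.P.carrier →ₗ[ℤ] (R.P.carrier × R'.P.carrier) ⧸ W :=
    W.mkQ ∘ₗ LinearMap.inr ℤ R.P.carrier R'.P.carrier with hα₁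
  set β₁ : ((R.P.carrier × R'.P.carrier) ⧸ W) →ₗ[ℤ] R.F.carrier :=
    W.liftQ (R.proj ∘ₗ LinearMap.fst ℤ R.P.carrier R'.P.carrier) hker1 with hβ₁
  have hβ₁mk : ∀ y : R.P.carrier × R'.P.carrier, β₁ (W.mkQ y) = R.proj y.1 := fun y => rfl
  have hα₁eq : ∀ (g : G) (q : R'.P.carrier), α₁ (R'.P.ρ g q) = ρX g (α₁ q) := by
    intro g q
    show W.mkQ (0, R'.P.ρ g q) = ρX g (W.mkQ (0, q))
    rw [hρXmk]
    congr 1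
    simp
  have hβ₁eq : ∀ (g : G) (x : (R.P.carrier × R'.P.carrier) ⧸ W),
      β₁ (ρX g x) = R.F.ρ g (β₁ x) := by
    intro g x
    obtain ⟨y, rfl⟩ := W.mkQ_surjective x
    rw [hρXmk, hβ₁mk, hβ₁mk]
    exact R.equiv_proj g y.1
  have hα₁inj : Function.Injective α₁ := by
    intro q q' hqq'
    have : (((0 : R.P.carrier), q) : R.P.carrier × R'.P.carrier) - (0, q') ∈ W := by
      rw [← Submodule.Quotient.eq]
      exact hqq'
    obtain ⟨m, hm⟩ := this
    have hm1 : R.incl m = 0 := by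
      have h := congrArg Prod.fst hm
      simpa [hj, LinearMap.prod_apply, Pi.prod, Prod.fst_sub] using h
    have hm2 : -R'.incl m = q - q' := by
      have h := congrArg Prod.snd hm
      simpa [hj, LinearMap.prod_apply, Pi.prod, Prod.snd_sub] using h
    have hm0 : m = 0 := R.inj (by rw [hm1]; simp)
    rw [hm0] at hm2
    simp only [map_zero, neg_zero] at hm2
    exact sub_eq_zero.mp hm2.symm
  have hβ₁surj : Function.Surjective β₁ := by
    intro f
    obtain ⟨p, hp⟩ := R.surj f
    exact ⟨W.mkQ (p, 0), by rw [hβ₁mk]; exact hp⟩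
  have hexact1 : LinearMap.ker β₁ = LinearMap.range α₁ := by
    apply le_antisymm
    · intro x hx
      obtain ⟨y, rfl⟩ := W.mkQ_surjective x
      have hy : R.proj y.1 = 0 := hx
      have : y.1 ∈ LinearMap.range R.incl := by
        rw [R.exact]; exact hy
      obtain ⟨m, hm⟩ := this
      refine ⟨y.2 + R'.incl m, ?_⟩
      show W.mkQ (0, y.2 + R'.incl m) = W.mkQ y
      rw [Submodule.mkQ_apply, Submodule.mkQ_apply, Submodule.Quotient.eq]
      refine ⟨-m, ?_⟩
      have hjm : j (-m) = (-R.incl m, R'.incl m) := by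
        simp [hj, LinearMap.prod_apply, Pi.prod]
      rw [hjm]
      have hy1 : y.1 = R.incl m := hm.symm
      ext
      · simp [Prod.fst_sub, hy1]
      · simp [Prod.snd_sub]
    · rintro _ ⟨q, rfl⟩
      show β₁ (W.mkQ (0, q)) = 0
      rw [hβ₁mk]
      simp
  obtain ⟨ι, _, b, σ, hb⟩ := R'.permP
  obtain ⟨e₁, he₁⟩ := equivariant_splitting R.F.ρ R.flabbyF R'.P.ρ b σ
    (fun g i => hb g i) ρX α₁ β₁ hα₁eq hβ₁eq hα₁inj hβ₁surj hexact1
  -- second exact sequence `0 → P → X → F' → 0`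
  have hker2 : W ≤ LinearMap.ker (R'.proj ∘ₗ LinearMap.snd ℤ R.P.carrier R'.P.carrier) := by
    rintro _ ⟨m, rfl⟩
    have : R'.incl m ∈ LinearMap.ker R'.proj := by
      rw [← R'.exact]; exact ⟨m, rfl⟩
    have h0 : R'.proj (R'.incl m) = 0 := this
    simp [LinearMap.mem_ker, hj, LinearMap.prod_apply, Pi.prod, h0]
  set α₂ : R.P.carrier →ₗ[ℤ] (R.P.carrier × R'.P.carrier) ⧸ W :=
    W.mkQ ∘ₗ LinearMap.inl ℤ R.P.carrier R'.P.carrier with hα₂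
  set β₂ : ((R.P.carrier × R'.P.carrier) ⧸ W) →ₗ[ℤ] R'.F.carrier :=
    W.liftQ (R'.proj ∘ₗ LinearMap.snd ℤ R.P.carrier R'.P.carrier) hker2 with hβ₂
  have hβ₂mk : ∀ y : R.P.carrier × R'.P.carrier, β₂ (W.mkQ y) = R'.proj y.2 := fun y => rfl
  have hα₂eq : ∀ (g : G) (q : R.P.carrier), α₂ (R.P.ρ g q) = ρX g (α₂ q) := by
    intro g q
    show W.mkQ (R.P.ρ g q, 0) = ρX g (W.mkQ (q, 0))
    rw [hρXmk]
    congr 1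
    simp
  have hβ₂eq : ∀ (g : G) (x : (R.P.carrier × R'.P.carrier) ⧸ W),
      β₂ (ρX g x) = R'.F.ρ g (β₂ x) := by
    intro g x
    obtain ⟨y, rfl⟩ := W.mkQ_surjective x
    rw [hρXmk, hβ₂mk, hβ₂mk]
    exact R'.equiv_proj g y.2
  have hα₂inj : Function.Injective α₂ := by
    intro q q' hqq'
    have : ((q, (0 : R'.P.carrier)) : R.P.carrier × R'.P.carrier) - (q', 0) ∈ W := by
      rw [← Submodule.Quotient.eq]
      exact hqq'
    obtain ⟨m, hm⟩ := this
    have hm2 : -R'.incl m = 0 := by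
      have h := congrArg Prod.snd hm
      simpa [hj, LinearMap.prod_apply, Pi.prod, Prod.snd_sub] using h
    have hm0 : m = 0 := R'.inj (by rw [neg_eq_zero.mp hm2]; simp)
    have hm1 : R.incl m = q - q' := by
      have h := congrArg Prod.fst hm
      simpa [hj, LinearMap.prod_apply, Pi.prod, Prod.fst_sub] using h
    rw [hm0, map_zero] at hm1
    exact sub_eq_zero.mp hm1.symm
  have hβ₂surj : Function.Surjective β₂ := by
    intro f
    obtain ⟨p, hp⟩ := R'.surj f
    exact ⟨W.mkQ (0, p), by rw [hβ₂mk]; exact hp⟩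
  have hexact2 : LinearMap.ker β₂ = LinearMap.range α₂ := by
    apply le_antisymm
    · intro x hx
      obtain ⟨y, rfl⟩ := W.mkQ_surjective x
      have hy : R'.proj y.2 = 0 := hx
      have : y.2 ∈ LinearMap.range R'.incl := by
        rw [R'.exact]; exact hy
      obtain ⟨m, hm⟩ := this
      refine ⟨y.1 + R.incl m, ?_⟩
      show W.mkQ (y.1 + R.incl m, 0) = W.mkQ y
      rw [Submodule.mkQ_apply, Submodule.mkQ_apply, Submodule.Quotient.eq]
      refine ⟨m, ?_⟩
      have hjm : j m = (R.incl m, -R'.incl m) := by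
        simp [hj, LinearMap.prod_apply, Pi.prod]
      rw [hjm]
      have hy2 : y.2 = R'.incl m := hm.symm
      ext
      · simp [Prod.fst_sub]
      · simp [Prod.snd_sub, hy2]
    · rintro _ ⟨q, rfl⟩
      show β₂ (W.mkQ (q, 0)) = 0
      rw [hβ₂mk]
      simp
  obtain ⟨ι', _, b', σ', hb'⟩ := R.permP
  obtain ⟨e₂, he₂⟩ := equivariant_splitting R'.F.ρ R'.flabbyF R.P.ρ b' σ'
    (fun g i => hb' g i) ρX α₂ β₂ hα₂eq hβ₂eq hα₂inj hβ₂surj hexact2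
  -- assemble the isomorphism `F × P' ≅ F' × P`
  have he₂symm : ∀ (g : G) (x : (R.P.carrier × R'.P.carrier) ⧸ W),
      e₂.symm (ρX g x) = (R.P.ρ g).prodMap (R'.F.ρ g) (e₂.symm x) := by
    intro g x
    apply e₂.injective
    rw [e₂.apply_symm_apply, he₂, e₂.apply_symm_apply]
  refine ⟨(LinearEquiv.prodComm ℤ R.F.carrier R'.P.carrier).trans
    (e₁.trans (e₂.symm.trans (LinearEquiv.prodComm ℤ R.P.carrier R'.F.carrier))), ?_⟩
  intro g m
  obtain ⟨f, p'⟩ := m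
  show (LinearEquiv.prodComm ℤ R.P.carrier R'.F.carrier)
      (e₂.symm (e₁ (R'.P.ρ g p', R.F.ρ g f)))
    = (R'.F.ρ g).prodMap (R.P.ρ g)
        ((LinearEquiv.prodComm ℤ R.P.carrier R'.F.carrier) (e₂.symm (e₁ (p', f))))
  have h1 : e₁ (R'.P.ρ g p', R.F.ρ g f) = ρX g (e₁ (p', f)) := he₁ g (p', f)
  rw [h1, he₂symm]
  rfl
end Paper
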